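/- For every k \in \N_0 and real \eta > 0, \xi \in \R: \sum_{n \in \Z} n^k exp(-\pi n^2/\eta^2 + 2\pi i \xi n/\eta^2) = ((-1)^{k/2} \eta^{k+1} / (2^k \pi^{k/2})) \Theta_k(\sqrt{\pi}\eta, \sqrt{\pi}\xi/\eta), where \Theta_k(u,v) = \sum_{n \in \Z} H_k(un+v) exp(-(un+v)^2) and H_k is the k-th Hermite polynomial. Here (-1)^{k/2} is interpreted as i^k, i.e., the stated real-valued identity holds after multiplying through appropriately; equivalently \sum_{n \in \Z} n^k exp(-\pi n^2/\eta^2 + 2\pi i \xi n/\eta^2) = (i^k \eta^{k+1} / (2^k \pi^{k/2})) \Theta_k(\sqrt{\pi}\eta, \sqrt{\pi}\xi/\eta) as complex numbers. -/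

import Mathlib

/-- The `k`-th physicists' Hermite polynomial. -/
noncomputable def hermiteH (k : ℕ) (x : ℝ) : ℝ :=
  (k.factorial : ℝ) * ∑ m ∈ Finset.range (k / 2 + 1),
    (-1 : ℝ) ^ m * (2 * x) ^ (k - 2 * m) /
      ((m.factorial : ℝ) * ((k - 2 * m).factorial : ℝ))

/-- `Θ_k(u, v) = ∑_{n ∈ ℤ} H_k(un + v) e^{-(un+v)²}`. -/
noncomputable def ThetaH (k : ℕ) (u v : ℝ) : ℝ :=
  ∑' n : ℤ, hermiteH k (u * n + v) * Real.exp (-(u * n + v) ^ 2)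

lemma hermiteH_zero (x : ℝ) : hermiteH 0 x = 1 := by
  simp [hermiteH]

lemma pow_le_fact_exp (y : ℝ) (hy : 0 ≤ y) (j : ℕ) : y ^ j ≤ j.factorial * Real.exp y := by
  have h := Real.sum_le_exp_of_nonneg hy (j + 1)
  have h2 : y ^ j / j.factorial ≤ Real.exp y := by
    refine le_trans ?_ h
    have : ∀ i ∈ Finset.range (j+1), (0:ℝ) ≤ y ^ i / i.factorial := fun i _ => by positivity
    calc y ^ j / j.factorial ≤ ∑ i ∈ Finset.range (j+1), y ^ i / i.factorial :=
      Finset.single_le_sum this (by simp)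
    _ = _ := rfl
  have hj : (0:ℝ) < j.factorial := by positivity
  rw [div_le_iff₀ hj] at h2
  linarith [h2]

lemma hermiteH_abs_le (k : ℕ) (x : ℝ) :
    |hermiteH k x| ≤ (k+1).factorial * Real.exp (2 * |x|) := by
  have h1 : |hermiteH k x| ≤ (k.factorial : ℝ) * ∑ m ∈ Finset.range (k / 2 + 1),
      |(-1 : ℝ) ^ m * (2 * x) ^ (k - 2 * m) /
      ((m.factorial : ℝ) * ((k - 2 * m).factorial : ℝ))| := by
    rw [hermiteH, abs_mul, abs_of_nonneg (by positivity : (0:ℝ) ≤ (k.factorial:ℝ))]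
    exact mul_le_mul_of_nonneg_left (Finset.abs_sum_le_sum_abs _ _) (by positivity)
  refine h1.trans ?_
  have h2 : ∀ m ∈ Finset.range (k / 2 + 1),
      |(-1 : ℝ) ^ m * (2 * x) ^ (k - 2 * m) /
      ((m.factorial : ℝ) * ((k - 2 * m).factorial : ℝ))| ≤ Real.exp (2 * |x|) := by
    intro m _
    rw [abs_div, abs_mul, abs_mul, abs_pow, abs_pow, abs_neg, abs_one, one_pow, one_mul,
      abs_of_nonneg (by positivity : (0:ℝ) ≤ (m.factorial:ℝ)),
      abs_of_nonneg (by positivity : (0:ℝ) ≤ ((k - 2*m).factorial:ℝ)), abs_mul, abs_two]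
    rw [div_le_iff₀ (by positivity)]
    calc (2 * |x|) ^ (k - 2*m) ≤ (k - 2*m).factorial * Real.exp (2 * |x|) :=
          pow_le_fact_exp _ (by positivity) _
    _ ≤ Real.exp (2*|x|) * ((m.factorial:ℝ) * ((k-2*m).factorial:ℝ)) := by
          have h1 : (1:ℝ) ≤ (m.factorial : ℝ) := by exact_mod_cast Nat.one_le_iff_ne_zero.mpr m.factorial_ne_zero
          rw [show ((k-2*m).factorial:ℝ) * Real.exp (2*|x|) = Real.exp (2*|x|) * (1 * ((k-2*m).factorial:ℝ)) by ring]
          gcongr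
  calc (k.factorial : ℝ) * ∑ m ∈ Finset.range (k / 2 + 1), |_| ≤
      (k.factorial : ℝ) * (((k/2+1 : ℕ):ℝ) * Real.exp (2*|x|)) := by
        refine mul_le_mul_of_nonneg_left ?_ (by positivity)
        calc _ ≤ ∑ _m ∈ Finset.range (k/2+1), Real.exp (2*|x|) := Finset.sum_le_sum h2
        _ = ((k/2+1 : ℕ):ℝ) * Real.exp (2*|x|) := by rw [Finset.sum_const, Finset.card_range, nsmul_eq_mul]
  _ ≤ (k+1).factorial * Real.exp (2 * |x|) := by
        have h3 : ((k/2+1:ℕ):ℝ) ≤ ((k+1:ℕ):ℝ) := by exact_mod_cast Nat.succ_le_succ (Nat.div_le_self k 2)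
        rw [show ((k+1).factorial:ℝ) * Real.exp (2*|x|) = ((k+1:ℕ):ℝ) * ((k.factorial:ℝ) * Real.exp (2*|x|)) by
          rw [Nat.factorial_succ]; push_cast; ring, show (k.factorial : ℝ) * (((k/2+1 : ℕ):ℝ) * Real.exp (2*|x|)) = ((k/2+1:ℕ):ℝ) * ((k.factorial:ℝ) * Real.exp (2*|x|)) by ring]
        gcongr

lemma hermite_decay (k : ℕ) (x : ℝ) :
    |hermiteH k x * Real.exp (-x^2)| ≤ (k+1).factorial * Real.exp 2 * Real.exp (-x^2/2) := by
  rw [abs_mul, Real.abs_exp]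
  calc |hermiteH k x| * Real.exp (-x^2)
      ≤ ((k+1).factorial * Real.exp (2*|x|)) * Real.exp (-x^2) :=
        mul_le_mul_of_nonneg_right (hermiteH_abs_le k x) (Real.exp_pos _).le
  _ = (k+1).factorial * Real.exp (2*|x| - x^2) := by rw [mul_assoc, ← Real.exp_add]; ring_nf
  _ ≤ (k+1).factorial * (Real.exp 2 * Real.exp (-x^2/2)) := by
      refine mul_le_mul_of_nonneg_left ?_ (by positivity)
      rw [← Real.exp_add]
      refine Real.exp_le_exp.mpr ?_
      nlinarith [sq_nonneg (|x| - 2), sq_abs x]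
  _ = _ := by ring

lemma summable_aux (c : ℝ) (hc : 0 < c) (j : ℕ) :
    Summable (fun n : ℤ => |(n:ℝ)|^j * Real.exp (-c * (n:ℝ)^2)) := by
  have key : Summable (fun n : ℕ => |(n:ℝ)|^j * Real.exp (-c * (n:ℝ)^2)) := by
    have hgeo : Summable (fun n : ℕ => (n:ℝ)^j * Real.exp (-c) ^ n) :=
      summable_pow_mul_geometric_of_norm_lt_one j
        (by rw [Real.norm_eq_abs, Real.abs_exp]; exact Real.exp_lt_one_iff.mpr (by linarith))
    refine Summable.of_nonneg_of_le (fun n => by positivity) (fun n => ?_) hgeo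
    rw [← Real.exp_nat_mul, abs_of_nonneg (Nat.cast_nonneg n)]
    refine mul_le_mul_of_nonneg_left (Real.exp_le_exp.mpr ?_) (by positivity)
    have : (n:ℝ) ≤ (n:ℝ)^2 := by exact_mod_cast Nat.le_self_pow (by norm_num) n
    nlinarith
  apply Summable.of_nat_of_neg <;> simpa using key

lemma summable_shift (u : ℝ) (hu : 0 < u) (w : ℝ) :
    Summable (fun n : ℤ => Real.exp (-(u*n+w)^2/4)) := by
  have h := (summable_aux (u^2/8) (by positivity) 0).mul_left (Real.exp (w^2/4))
  refine Summable.of_nonneg_of_le (fun n => (Real.exp_pos _).le) (fun n => ?_) h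
  simp only [pow_zero, one_mul, ← Real.exp_add]
  refine Real.exp_le_exp.mpr ?_
  nlinarith [sq_nonneg (u*(n:ℝ) + 2*w)]

noncomputable def aH (k m : ℕ) : ℝ :=
  if 2*m ≤ k then (-1:ℝ)^m * ((k.factorial : ℝ) / ((m.factorial : ℝ) * ((k-2*m).factorial : ℝ))) else 0

lemma hermiteH_eq_sum (k : ℕ) (x : ℝ) :
    hermiteH k x = ∑ m ∈ Finset.range (k+1), aH k m * (2*x)^(k-2*m) := by
  rw [hermiteH, Finset.mul_sum]
  rw [← Finset.sum_subset (Finset.range_subset_range.mpr (by omega : k/2+1 ≤ k+1))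
    (fun m _ hm => ?_)]
  · refine Finset.sum_congr rfl (fun m hm => ?_)
    rw [Finset.mem_range] at hm
    rw [aH, if_pos (by omega)]
    ring
  · rw [Finset.mem_range] at *
    rw [aH, if_neg (by omega), zero_mul]

lemma aH_zero (k : ℕ) : aH k 0 = 1 := by
  simp [aH]
  exact Nat.factorial_ne_zero k

lemma aH_rec (k m : ℕ) (hm : 1 ≤ m) (h2 : 2*m ≤ k) :
    aH (k+1) m = aH k m - 2*(((k-2*(m-1) : ℕ)):ℝ) * aH k (m-1) := by
  obtain ⟨i, rfl⟩ : ∃ i, m = i + 1 := ⟨m - 1, by omega⟩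
  obtain ⟨j, rfl⟩ : ∃ j, k = 2*(i+1) + j := ⟨k - 2*(i+1), by omega⟩
  rw [aH, aH, aH, if_pos (by omega), if_pos (by omega), if_pos (by omega)]
  have e1 : 2*(i+1)+j+1 - 2*(i+1) = j+1 := by omega
  have e2 : 2*(i+1)+j - 2*(i+1) = j := by omega
  have e3 : i+1-1 = i := by omega
  have e4 : 2*(i+1)+j - 2*i = j+2 := by omega
  rw [e1, e2, e3, e4]
  have f1 : ((2*(i+1)+j+1).factorial : ℝ) = (2*(i+1)+j+1) * ((2*(i+1)+j).factorial : ℝ) := by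
    rw [Nat.factorial_succ]; push_cast; ring
  have f2 : ((j+1).factorial : ℝ) = (j+1) * (j.factorial : ℝ) := by
    rw [Nat.factorial_succ]; push_cast; ring
  have f3 : ((j+2).factorial : ℝ) = (j+2) * ((j+1) * (j.factorial : ℝ)) := by
    rw [show j+2 = (j+1)+1 from rfl, Nat.factorial_succ, Nat.factorial_succ]; push_cast; ring
  have f4 : ((i+1).factorial : ℝ) = (i+1) * (i.factorial : ℝ) := by
    rw [Nat.factorial_succ]; push_cast; ring
  rw [f1, f2, f3, f4]
  have hj : (j.factorial : ℝ) ≠ 0 := by positivity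
  have hi : (i.factorial : ℝ) ≠ 0 := by positivity
  field_simp
  push_cast
  ring

lemma aH_big (k : ℕ) (x : ℝ) :
    ∑ m ∈ Finset.range (k+1), aH k m * (2*((k-2*m : ℕ):ℝ) * (2*x)^(k-2*m-1))
      = 2*x*hermiteH k x - hermiteH (k+1) x := by
  have hR : hermiteH (k+1) x = ∑ m ∈ Finset.range (k+2), aH (k+1) m * (2*x)^(k+1-2*m) :=
    hermiteH_eq_sum (k+1) x
  have hM : 2*x*hermiteH k x = ∑ m ∈ Finset.range (k+2), aH k m * (2*x)^(k+1-2*m) := by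
    rw [hermiteH_eq_sum k x, Finset.mul_sum]
    conv_rhs => rw [show k+2 = (k+1)+1 from rfl, Finset.sum_range_succ]
    rw [show aH k (k+1) = 0 by rw [aH, if_neg (by omega)], zero_mul, add_zero]
    refine Finset.sum_congr rfl (fun m hm => ?_)
    by_cases h : 2*m ≤ k
    · rw [show k+1-2*m = (k-2*m)+1 by omega, pow_succ]
      ring
    · rw [show aH k m = 0 by rw [aH, if_neg h]]; ring
  have hD : ∑ m ∈ Finset.range (k+1), aH k m * (2*((k-2*m : ℕ):ℝ) * (2*x)^(k-2*m-1))
      = ∑ m ∈ Finset.range (k+2), (if m = 0 then 0 else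
          aH k (m-1) * (2*((k-2*(m-1) : ℕ):ℝ) * (2*x)^(k-2*(m-1)-1))) := by
    rw [Finset.sum_range_succ' (fun m => (if m = 0 then (0:ℝ) else
          aH k (m-1) * (2*((k-2*(m-1) : ℕ):ℝ) * (2*x)^(k-2*(m-1)-1)))) (k+1)]
    simp
  rw [hD, hR, hM, ← Finset.sum_sub_distrib]
  refine Finset.sum_congr rfl (fun m hm => ?_)
  rw [Finset.mem_range] at hm
  rcases Nat.eq_zero_or_pos m with h0 | h1
  · subst h0
    simp [aH_zero]
  rw [if_neg (by omega)]
  by_cases hle : 2*m ≤ k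
  · rw [show k-2*(m-1)-1 = k+1-2*m by omega, aH_rec k m h1 hle]
    ring
  by_cases heq : 2*m = k+1
  · obtain ⟨i, rfl⟩ : ∃ i, m = i + 1 := ⟨m - 1, by omega⟩
    obtain rfl : k = 2*i+1 := by omega
    rw [show (i+1)-1 = i from rfl,
      show 2*i+1-2*i-1 = 0 by omega, show 2*i+1+1-2*(i+1) = 0 by omega,
      show 2*i+1-2*i = 1 by omega,
      show aH (2*i+1) (i+1) = 0 by rw [aH, if_neg (by omega)],
      show aH (2*i+1) i = (-1:ℝ)^i * (((2*i+1).factorial : ℝ) /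
        ((i.factorial : ℝ) * ((1).factorial : ℝ))) by
          rw [aH, if_pos (by omega), show 2*i+1-2*i = 1 by omega],
      show aH (2*i+1+1) (i+1) = (-1:ℝ)^(i+1) * (((2*i+2).factorial : ℝ) /
        (((i+1).factorial : ℝ) * ((0).factorial : ℝ))) by
          rw [aH, if_pos (by omega), show 2*i+1+1-2*(i+1) = 0 by omega,
            show 2*i+1+1 = 2*i+2 from rfl]]
    have f4 : ((i+1).factorial : ℝ) = (i+1) * (i.factorial : ℝ) := by
      rw [Nat.factorial_succ]; push_cast; ring
    have f5 : ((2*i+2).factorial : ℝ) = (2*i+2) * ((2*i+1).factorial : ℝ) := by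
      rw [show 2*i+2 = (2*i+1)+1 from rfl, Nat.factorial_succ]; push_cast; ring
    rw [f4, f5]
    have hi : (i.factorial : ℝ) ≠ 0 := by positivity
    have h21 : ((2*i+1).factorial : ℝ) ≠ 0 := by positivity
    simp only [Nat.factorial_zero, Nat.factorial_one, Nat.cast_one, mul_one]
    field_simp
    push_cast
    ring
  · rw [show aH (k+1) m = 0 by rw [aH, if_neg (by omega)],
      show aH k m = 0 by rw [aH, if_neg (by omega)],
      show k-2*(m-1) = 0 by omega]
    norm_num

lemma hasDerivAt_hermiteH (k : ℕ) (x : ℝ) :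
    HasDerivAt (hermiteH k) (2*x*hermiteH k x - hermiteH (k+1) x) x := by
  rw [← aH_big]
  have hfun : hermiteH k = fun y => ∑ m ∈ Finset.range (k+1), aH k m * (2*y)^(k-2*m) :=
    funext (hermiteH_eq_sum k)
  rw [hfun]
  apply HasDerivAt.fun_sum
  intro m _
  have h2 : HasDerivAt (fun y : ℝ => 2*y) 2 x := by
    simpa using (hasDerivAt_id x).const_mul (2:ℝ)
  have hp := (hasDerivAt_pow (k-2*m) (2*x)).comp x h2
  have := hp.const_mul (aH k m)
  exact this.congr_deriv (by ring)

lemma hasDerivAt_hermite_gauss (k : ℕ) (x : ℝ) :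
    HasDerivAt (fun y => hermiteH k y * Real.exp (-y^2))
      (-(hermiteH (k+1) x * Real.exp (-x^2))) x := by
  have h1 : HasDerivAt (fun y : ℝ => -y^2) (-(2*x)) x := by
    simpa using (hasDerivAt_pow 2 x).fun_neg
  have hg : HasDerivAt (fun y : ℝ => Real.exp (-y^2)) (Real.exp (-x^2) * (-(2*x))) x := h1.exp
  have := (hasDerivAt_hermiteH k x).fun_mul hg
  exact this.congr_deriv (by ring)


lemma hasDerivAt_cexp_affine (A B : ℂ) (t : ℝ) :
    HasDerivAt (fun s : ℝ => Complex.exp (A + B * s)) (B * Complex.exp (A + B * t)) t := by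
  have h0 : HasDerivAt (fun s : ℝ => ((s : ℝ) : ℂ)) 1 t := by
    simpa using (hasDerivAt_id t).ofReal_comp
  have h1 := ((h0.const_mul B).const_add A).cexp
  simpa [mul_comm] using h1

lemma norm_cexp_aux (r s : ℝ) : ‖Complex.exp ((r:ℂ) + (s:ℂ) * Complex.I)‖ = Real.exp r := by
  rw [Complex.norm_exp]
  simp

lemma norm_int_pow (n : ℤ) (k : ℕ) : ‖((n:ℂ))^k‖ = |(n:ℝ)|^k := by
  rw [norm_pow]
  norm_num

lemma hasDerivAt_L (k : ℕ) (η : ℝ) (hη : 0 < η) (ξ : ℝ) :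
    HasDerivAt (fun t : ℝ => ∑' n : ℤ, (n : ℂ) ^ k *
        Complex.exp (-(Real.pi : ℂ) * n ^ 2 / η ^ 2 + 2 * Real.pi * Complex.I * t * n / η ^ 2))
      ((2 * Real.pi * Complex.I / η ^ 2) * ∑' n : ℤ, (n : ℂ) ^ (k+1) *
        Complex.exp (-(Real.pi : ℂ) * n ^ 2 / η ^ 2 + 2 * Real.pi * Complex.I * ξ * n / η ^ 2)) ξ := by
  set A : ℤ → ℂ := fun n => -(Real.pi : ℂ) * n ^ 2 / η ^ 2 with hA
  set B : ℤ → ℂ := fun n => 2 * Real.pi * Complex.I * n / η ^ 2 with hB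
  have hfun_eq : ∀ (t:ℝ) (n:ℤ), -(Real.pi : ℂ) * n ^ 2 / η ^ 2 + 2 * Real.pi * Complex.I * ↑t * n / η ^ 2
      = A n + B n * ↑t := by
    intro t n; rw [hA, hB]; ring
  simp_rw [hfun_eq]
  have harg : ∀ (t:ℝ) (n:ℤ), A n + B n * ↑t
      = ((-(Real.pi * n^2/η^2) : ℝ) : ℂ) + ((2*Real.pi*t*n/η^2 : ℝ):ℂ) * Complex.I := by
    intro t n; rw [hA, hB]; push_cast; ring
  have hnorm : ∀ (t:ℝ) (n:ℤ), ‖(n:ℂ)^k * (B n * Complex.exp (A n + B n * ↑t))‖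
      = (2*Real.pi/η^2) * (|(n:ℝ)|^(k+1) * Real.exp (-(Real.pi/η^2) * (n:ℝ)^2)) := by
    intro t n
    rw [harg, norm_mul, norm_mul, norm_cexp_aux, norm_int_pow, hB]
    have : ‖2 * (Real.pi:ℂ) * Complex.I * (n:ℂ) / (η:ℂ) ^ 2‖ = 2*Real.pi*|(n:ℝ)|/η^2 := by
      simp [map_div₀, map_mul, Complex.norm_I, Complex.norm_real,
        Complex.norm_intCast, abs_of_nonneg Real.pi_pos.le, abs_of_nonneg (sq_nonneg η)]
    rw [this,
      show -(Real.pi * (n:ℝ)^2/η^2) = -(Real.pi/η^2) * (n:ℝ)^2 by ring]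
    ring
  have hu : Summable (fun n : ℤ => (2*Real.pi/η^2) * (|(n:ℝ)|^(k+1) * Real.exp (-(Real.pi/η^2) * (n:ℝ)^2))) :=
    (summable_aux (Real.pi/η^2) (by positivity) (k+1)).mul_left _
  have hf : ∀ (n : ℤ) (t : ℝ), HasDerivAt (fun t : ℝ => (n:ℂ)^k * Complex.exp (A n + B n * ↑t))
      ((n:ℂ)^k * (B n * Complex.exp (A n + B n * ↑t))) t :=
    fun n t => (hasDerivAt_cexp_affine (A n) (B n) t).const_mul _
  have hf' : ∀ (n : ℤ) (t : ℝ), ‖(n:ℂ)^k * (B n * Complex.exp (A n + B n * ↑t))‖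
      ≤ (2*Real.pi/η^2) * (|(n:ℝ)|^(k+1) * Real.exp (-(Real.pi/η^2) * (n:ℝ)^2)) :=
    fun n t => le_of_eq (hnorm t n)
  have hf0 : Summable (fun n : ℤ => (n:ℂ)^k * Complex.exp (A n + B n * (ξ:ℝ))) := by
    refine Summable.of_norm ?_
    refine Summable.of_nonneg_of_le (fun n => norm_nonneg _) (fun n => ?_)
      ((summable_aux (Real.pi/η^2) (by positivity) k).mul_left 1)
    rw [harg, norm_mul, norm_cexp_aux, norm_int_pow,
      show -(Real.pi * (n:ℝ)^2/η^2) = -(Real.pi/η^2) * (n:ℝ)^2 by ring]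
    rw [one_mul]
  have main := hasDerivAt_tsum hu hf hf' hf0 ξ
  rw [← tsum_mul_left]
  have hterm : ∀ n : ℤ, (2 * Real.pi * Complex.I / η ^ 2) * ((n:ℂ)^(k+1) * Complex.exp (A n + B n * (ξ:ℝ)))
      = (n:ℂ)^k * (B n * Complex.exp (A n + B n * (ξ:ℝ))) := by
    intro n; rw [hB]; ring
  simp_rw [hterm]
  exact main

lemma hasDerivAt_R (k : ℕ) (u b : ℝ) (hu : 0 < u) (ξ : ℝ) :
    HasDerivAt (fun t : ℝ => ∑' n : ℤ, hermiteH k (u * n + b * t) * Real.exp (-(u * n + b * t) ^ 2))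
      (-b * ∑' n : ℤ, hermiteH (k+1) (u * n + b * ξ) * Real.exp (-(u * n + b * ξ) ^ 2)) ξ := by
  have hg : ∀ (n : ℤ) (t : ℝ), HasDerivAt (fun t : ℝ => hermiteH k (u * n + b * t) * Real.exp (-(u * n + b * t) ^ 2))
      (-(hermiteH (k+1) (u * n + b * t) * Real.exp (-(u * n + b * t) ^ 2)) * b) t := by
    intro n t
    have haff : HasDerivAt (fun t : ℝ => u * n + b * t) b t := by
      simpa using ((hasDerivAt_id t).const_mul b).const_add (u * n)
    have hcomp := (hasDerivAt_hermite_gauss k (u * n + b * t)).comp t haff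
    exact hcomp
  have key : ∀ (n : ℤ) (t : ℝ), t ∈ Metric.ball ξ 1 →
      ‖-(hermiteH (k+1) (u * n + b * t) * Real.exp (-(u * n + b * t) ^ 2)) * b‖
      ≤ (|b| * ((k+1+1).factorial * Real.exp 2 * Real.exp (b^2/2))) * Real.exp (-(u*n+b*ξ)^2/4) := by
    intro n t ht
    rw [Real.norm_eq_abs, abs_mul, abs_neg]
    have h1 := hermite_decay (k+1) (u * n + b * t)
    have h2 : Real.exp (-(u * n + b * t)^2/2) ≤ Real.exp (b^2/2) * Real.exp (-(u*n+b*ξ)^2/4) := by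
      rw [← Real.exp_add]
      refine Real.exp_le_exp.mpr ?_
      have hd : (t - ξ)^2 ≤ 1 := by
        rw [Metric.mem_ball, Real.dist_eq] at ht
        nlinarith [abs_nonneg (t - ξ), sq_abs (t - ξ)]
      have hbd : (b * (t - ξ))^2 ≤ b^2 := by nlinarith [sq_nonneg b]
      have hx : u * n + b * t = (u * n + b * ξ) + b * (t - ξ) := by ring
      rw [hx]
      nlinarith [sq_nonneg ((u * n + b * ξ) + 2 * (b * (t - ξ)))]
    calc |hermiteH (k+1) (u * n + b * t) * Real.exp (-(u * n + b * t) ^ 2)| * |b|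
        ≤ ((k+1+1).factorial * Real.exp 2 * Real.exp (-(u * n + b * t)^2/2)) * |b| := by
          exact mul_le_mul_of_nonneg_right h1 (abs_nonneg b)
      _ ≤ ((k+1+1).factorial * Real.exp 2 * (Real.exp (b^2/2) * Real.exp (-(u*n+b*ξ)^2/4))) * |b| := by
          refine mul_le_mul_of_nonneg_right (mul_le_mul_of_nonneg_left h2 (by positivity)) (abs_nonneg b)
      _ = (|b| * ((k+1+1).factorial * Real.exp 2 * Real.exp (b^2/2))) * Real.exp (-(u*n+b*ξ)^2/4) := by
          ring
  have hu_sum : Summable (fun n : ℤ => (|b| * ((k+1+1).factorial * Real.exp 2 * Real.exp (b^2/2))) * Real.exp (-(u*n+b*ξ)^2/4)) :=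
    (summable_shift u hu (b*ξ)).mul_left _
  have hf0 : Summable (fun n : ℤ => hermiteH k (u * n + b * ξ) * Real.exp (-(u * n + b * ξ) ^ 2)) := by
    refine Summable.of_norm ?_
    refine Summable.of_nonneg_of_le (fun n => norm_nonneg _) (fun n => ?_)
      ((summable_shift u hu (b*ξ)).mul_left ((k+1).factorial * Real.exp 2))
    rw [Real.norm_eq_abs]
    refine (hermite_decay k (u * n + b * ξ)).trans ?_
    have hee : Real.exp (-(u * n + b * ξ)^2/2) ≤ Real.exp (-(u * n + b * ξ)^2/4) :=
      Real.exp_le_exp.mpr (by nlinarith [sq_nonneg (u * (n:ℝ) + b * ξ)])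
    exact mul_le_mul_of_nonneg_left hee (by positivity)
  have main := hasDerivAt_tsum_of_isPreconnected hu_sum Metric.isOpen_ball
    ((convex_ball ξ 1).isPreconnected) (fun n y _ => hg n y) key
    (Metric.mem_ball_self one_pos) hf0 (Metric.mem_ball_self one_pos)
  have hterm : ∀ n : ℤ, (-(hermiteH (k+1) (u * n + b * ξ) * Real.exp (-(u * n + b * ξ) ^ 2))) * b
      = (-b) * (hermiteH (k+1) (u * n + b * ξ) * Real.exp (-(u * n + b * ξ) ^ 2)) := fun n => by ring
  simp_rw [hterm] at main
  rw [tsum_mul_left] at main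
  exact main

lemma jacobi_base (η ξ : ℝ) (hη : 0 < η) :
    (∑' n : ℤ, Complex.exp (-(Real.pi : ℂ) * n ^ 2 / η ^ 2 +
          2 * Real.pi * Complex.I * ξ * n / η ^ 2)) =
      (η : ℂ) * ∑' n : ℤ, (Real.exp (-(Real.sqrt Real.pi * η * n + Real.sqrt Real.pi * ξ / η)^2) : ℂ) := by
  have hc : (1/η^2 : ℂ) = ((1/η^2 : ℝ) : ℂ) := by push_cast; ring
  have ha : (0:ℝ) < ((1/η^2 : ℂ)).re := by rw [hc, Complex.ofReal_re]; positivity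
  have key := Complex.tsum_exp_neg_quadratic ha (Complex.I * ξ / η^2)
  have h1 : ∀ n : ℤ, -(Real.pi:ℂ) * (1/η^2) * n^2 + 2*Real.pi*(Complex.I * ξ / η^2)*n
      = -(Real.pi : ℂ) * n ^ 2 / η ^ 2 + 2 * Real.pi * Complex.I * ξ * n / η ^ 2 := by
    intro n; push_cast; ring
  simp_rw [h1] at key
  rw [key]
  congr 1
  · rw [show (1/2 : ℂ) = ((1/2 : ℝ) : ℂ) by norm_num, hc, ← Complex.ofReal_cpow (by positivity)]
    have h3 : (1/η^2 : ℝ) ^ ((1:ℝ)/2) = 1/η := by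
      rw [← Real.sqrt_eq_rpow, show (1/η^2 : ℝ) = (1/η)^2 by ring, Real.sqrt_sq (by positivity)]
    rw [h3]
    push_cast
    rw [one_div_one_div]
  · rw [← (Equiv.neg ℤ).tsum_eq fun n : ℤ =>
      (Real.exp (-(Real.sqrt Real.pi * η * n + Real.sqrt Real.pi * ξ / η)^2) : ℂ)]
    refine tsum_congr fun n => ?_
    have hI : Complex.I * (Complex.I * ξ / η^2) = ((-(ξ/η^2) : ℝ) : ℂ) := by
      rw [← mul_div_assoc, ← mul_assoc, Complex.I_mul_I]; push_cast; ring
    rw [hI]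
    have hd : -(Real.pi:ℂ)/(1/(η:ℂ)^2) = -(Real.pi:ℂ)*(η:ℂ)^2 := by
      rw [div_div_eq_mul_div, div_one]
    have hexp : -(Real.pi:ℂ)/(1/(η:ℂ)^2) * ((n:ℂ) + ((-(ξ/η^2):ℝ):ℂ))^2
        = ((-(Real.pi * η^2 * ((n:ℝ) - ξ/η^2)^2) : ℝ) : ℂ) := by
      rw [hd]
      push_cast
      ring
    rw [hexp]
    have hre : -(Real.pi * η^2 * ((n:ℝ) - ξ/η^2)^2)
        = -(Real.sqrt Real.pi * η * (((Equiv.neg ℤ) n : ℤ):ℝ) + Real.sqrt Real.pi * ξ / η)^2 := by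
      set s := Real.sqrt Real.pi with hs
      rw [← Real.sq_sqrt Real.pi_pos.le, ← hs]
      push_cast [Equiv.neg_apply]
      have hη' : η ≠ 0 := hη.ne'
      field_simp
      ring
    rw [hre, Complex.ofReal_exp]


/-- The theta–Hermite identity (Lemma 3 in [KIK08b]). -/
theorem theta_hermite_identity (k : ℕ) (η ξ : ℝ) (hη : 0 < η) :
    (∑' n : ℤ, (n : ℂ) ^ k *
        Complex.exp (-(Real.pi : ℂ) * n ^ 2 / η ^ 2 +
          2 * Real.pi * Complex.I * ξ * n / η ^ 2)) =
      (Complex.I ^ k * η ^ (k + 1) / (2 ^ k * (Real.pi : ℂ) ^ ((k : ℂ) / 2))) *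
        (ThetaH k (Real.sqrt Real.pi * η) (Real.sqrt Real.pi * ξ / η) : ℂ) := by
  induction k generalizing ξ with
  | zero =>
      have hbase := jacobi_base η ξ hη
      simp only [pow_zero, one_mul, Nat.cast_zero, zero_div, Complex.cpow_zero, mul_one,
        pow_one]
      rw [zero_add, pow_one, div_one, ThetaH]
      have hth : ∀ n : ℤ, hermiteH 0 (Real.sqrt Real.pi * η * n + Real.sqrt Real.pi * ξ / η) *
          Real.exp (-(Real.sqrt Real.pi * η * n + Real.sqrt Real.pi * ξ / η) ^ 2)
          = Real.exp (-(Real.sqrt Real.pi * η * n + Real.sqrt Real.pi * ξ / η) ^ 2) := by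
        intro n; rw [hermiteH_zero, one_mul]
      simp_rw [hth]
      rw [Complex.ofReal_tsum]
      exact hbase
  | succ k ih =>
      set u : ℝ := Real.sqrt Real.pi * η with hu_def
      set b : ℝ := Real.sqrt Real.pi / η with hb_def
      have hu : 0 < u := by rw [hu_def]; positivity
      have hbt : ∀ t : ℝ, Real.sqrt Real.pi * t / η = b * t := fun t => by rw [hb_def]; ring
      set C : ℕ → ℂ := fun j => Complex.I ^ j * (η:ℂ) ^ (j + 1) / (2 ^ j * (Real.pi : ℂ) ^ ((j : ℂ) / 2)) with hC
      have hL := hasDerivAt_L k η hη ξ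
      have hR0 : HasDerivAt (fun t : ℝ => ThetaH k u (b * t)) (-b * ThetaH (k+1) u (b * ξ)) ξ :=
        hasDerivAt_R k u b hu ξ
      have hR := (hR0.ofReal_comp).const_mul (C k)
      have heq : (fun t : ℝ => ∑' n : ℤ, (n : ℂ) ^ k *
          Complex.exp (-(Real.pi : ℂ) * n ^ 2 / η ^ 2 + 2 * Real.pi * Complex.I * t * n / η ^ 2))
          = fun t : ℝ => C k * ((ThetaH k u (b * t) : ℝ) : ℂ) := by
        funext t
        rw [ih t, hbt t]
      rw [heq] at hL
      have hder := hL.unique hR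
      have h2πI : (2 * (Real.pi:ℂ) * Complex.I / (η:ℂ) ^ 2) ≠ 0 := by
        apply div_ne_zero
        · simp [Complex.I_ne_zero, Complex.ofReal_ne_zero, Real.pi_ne_zero]
        · simpa using Complex.ofReal_ne_zero.mpr hη.ne'
      have hπhalf : (Real.pi : ℂ) ^ (((k+1:ℕ) : ℂ) / 2)
          = (Real.pi : ℂ) ^ ((k : ℂ) / 2) * ((Real.sqrt Real.pi : ℝ) : ℂ) := by
        rw [show (((k+1:ℕ) : ℂ) / 2) = (k : ℂ)/2 + 1/2 by push_cast; ring,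
          Complex.cpow_add _ _ (by exact_mod_cast Real.pi_ne_zero)]
        congr 1
        rw [show (1/2 : ℂ) = ((1/2 : ℝ) : ℂ) by norm_num, ← Complex.ofReal_cpow Real.pi_pos.le,
          ← Real.sqrt_eq_rpow]
      have hcp : (Real.pi : ℂ) ^ ((k : ℂ) / 2) ≠ 0 := by
        simp [Complex.cpow_eq_zero_iff, Complex.ofReal_ne_zero, Real.pi_ne_zero]
      have hsqrtπ : ((Real.sqrt Real.pi : ℝ) : ℂ) ≠ 0 := by
        simp [Complex.ofReal_ne_zero, Real.sqrt_ne_zero', Real.pi_pos]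
      have hηc : ((η:ℝ) : ℂ) ≠ 0 := Complex.ofReal_ne_zero.mpr hη.ne'
      have hconst : C (k+1) * (2 * (Real.pi:ℂ) * Complex.I / (η:ℂ) ^ 2) = C k * ((-b : ℝ) : ℂ) := by
        rw [hC]
        simp only
        rw [hπhalf, hb_def]
        generalize hP : (Real.pi:ℂ) ^ ((k:ℂ)/2) = P at hcp ⊢
        push_cast
        rw [show ((Real.pi:ℝ):ℂ) = ((Real.sqrt Real.pi : ℝ):ℂ)^2 by
          rw [← Complex.ofReal_pow, Real.sq_sqrt Real.pi_pos.le]]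
        have hI := Complex.I_ne_zero
        field_simp
        ring_nf
        rw [Complex.I_sq]
        ring
      rw [hbt ξ]
      apply mul_left_cancel₀ h2πI
      rw [hder]
      rw [show ((-b * ThetaH (k+1) u (b*ξ) : ℝ) : ℂ) = ((-b:ℝ):ℂ) * ((ThetaH (k+1) u (b*ξ) : ℝ):ℂ) by push_cast; ring]
      rw [show (2 * (Real.pi:ℂ) * Complex.I / (η:ℂ) ^ 2) * (C (k+1) * ((ThetaH (k+1) u (b*ξ) : ℝ):ℂ))
        = (C (k+1) * (2 * (Real.pi:ℂ) * Complex.I / (η:ℂ) ^ 2)) * ((ThetaH (k+1) u (b*ξ) : ℝ):ℂ) by ring,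
        hconst]
      ring
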